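/- The stop-top-down traversal is infallible: define stop_td(s) as the least fixed point of v ↦ Choice s (All v); then for every argument strategy s whose evaluation relation is total on every term (for each t, either s succeeds or fails on t), and for every term t, there exists t' such that stop_td(s) applied to t evaluates to some t' (it never evaluates to none). -/

import Mathlib

inductive Term where
  | Node : String → List Term → Term

inductive Strategy where
  | Id : Strategy
  | Fail : Strategy
  | Seq : Strategy → Strategy → Strategy
  | Choice : Strategy → Strategy → Strategy
  | All : Strategy → Strategy
  | One : Strategy → Strategy

inductive eval : Strategy → Term → Option Term → Prop where
  | id : ∀ t, eval .Id t (some t)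
  | fail : ∀ t, eval .Fail t none
  | seq_fail : ∀ {s s' : Strategy} {t : Term},
      eval s t none → eval (.Seq s s') t none
  | seq_ok : ∀ {s s' : Strategy} {t t' : Term} {r : Option Term},
      eval s t (some t') → eval s' t' r → eval (.Seq s s') t r
  | choice_ok : ∀ {s s' : Strategy} {t t' : Term},
      eval s t (some t') → eval (.Choice s s') t (some t')
  | choice_fail : ∀ {s s' : Strategy} {t : Term} {r : Option Term},
      eval s t none → eval s' t r → eval (.Choice s s') t r
  | all_ok : ∀ {s : Strategy} {c : String} {ts ts' : List Term},
      ts'.length = ts.length →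
      (∀ i (hi : i < ts.length) (hi' : i < ts'.length),
        eval s (ts.get ⟨i, hi⟩) (some (ts'.get ⟨i, hi'⟩))) →
      eval (.All s) (.Node c ts) (some (.Node c ts'))
  | all_fail : ∀ {s : Strategy} {c : String} {ts : List Term} {t : Term},
      t ∈ ts → eval s t none → eval (.All s) (.Node c ts) none
  | one_ok : ∀ {s : Strategy} {c : String} {ts : List Term} {t' : Term} {i : ℕ}
      (hi : i < ts.length),
      eval s (ts.get ⟨i, hi⟩) (some t') →
      (∀ j (hj : j < i), eval s (ts.get ⟨j, Nat.lt_trans hj hi⟩) none) →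
      eval (.One s) (.Node c ts) (some (.Node c (ts.set i t')))
  | one_fail : ∀ {s : Strategy} {c : String} {ts : List Term},
      (∀ t ∈ ts, eval s t none) → eval (.One s) (.Node c ts) none

inductive evalStopTd (s : Strategy) : Term → Option Term → Prop where
  | ok : ∀ {t t' : Term}, eval s t (some t') → evalStopTd s t (some t')
  | all_ok : ∀ {c : String} {ts ts' : List Term},
      eval s (.Node c ts) none →
      ts'.length = ts.length →
      (∀ i (hi : i < ts.length) (hi' : i < ts'.length),
        evalStopTd s (ts.get ⟨i, hi⟩) (some (ts'.get ⟨i, hi'⟩))) →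
      evalStopTd s (.Node c ts) (some (.Node c ts'))
  | all_fail : ∀ {c : String} {ts : List Term} {t : Term},
      eval s (.Node c ts) none →
      t ∈ ts → evalStopTd s t none →
      evalStopTd s (.Node c ts) none


mutual
def termSize : Term → Nat
  | .Node _ ts => 1 + listSize ts
def listSize : List Term → Nat
  | [] => 0
  | t :: ts => termSize t + listSize ts
end

theorem le_listSize {x : Term} : ∀ {ts : List Term}, x ∈ ts → termSize x ≤ listSize ts := by
  intro ts
  induction ts with
  | nil => intro h; simp at h
  | cons a l ih =>
    intro h
    cases h with
    | head => simp [listSize]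
    | tail _ h => have := ih h; simp [listSize]; omega

theorem size_lt {x : Term} {c : String} {ts : List Term} (h : x ∈ ts) :
    termSize x < termSize (.Node c ts) := by
  have := le_listSize h
  simp [termSize]; omega

theorem choose_list {P : Term → Term → Prop} :
    ∀ (ts : List Term), (∀ x ∈ ts, ∃ y, P x y) →
    ∃ ts' : List Term, ts'.length = ts.length ∧
      ∀ i (hi : i < ts.length) (hi' : i < ts'.length),
        P (ts.get ⟨i, hi⟩) (ts'.get ⟨i, hi'⟩) := by
  intro ts
  induction ts with
  | nil => intro _; exact ⟨[], rfl, by intro i hi; simp at hi⟩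
  | cons a l ih =>
    intro h
    obtain ⟨y, hy⟩ := h a List.mem_cons_self
    obtain ⟨l', hl, hp⟩ := ih (fun x hx => h x (List.mem_cons_of_mem a hx))
    refine ⟨y :: l', by simp [hl], ?_⟩
    intro i hi hi'
    cases i with
    | zero => exact hy
    | succ n => exact hp n (by simpa using hi) (by simpa using hi')


theorem stmt17 : ∀ (s : Strategy),
    (∀ t : Term, ∃ r : Option Term, eval s t r) →
    ∀ t : Term, (∃ t' : Term, evalStopTd s t (some t')) ∧ ¬ evalStopTd s t none := by
  intro s htot
  have main : ∀ n (t : Term), termSize t ≤ n →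
      (∃ t' : Term, evalStopTd s t (some t')) ∧ ¬ evalStopTd s t none := by
    intro n
    induction n with
    | zero => intro t ht; cases t with
      | Node c ts => simp [termSize] at ht
    | succ n ih =>
      intro t ht
      cases t with
      | Node c ts =>
        have ihsub : ∀ x ∈ ts, (∃ t', evalStopTd s x (some t')) ∧ ¬ evalStopTd s x none := by
          intro x hx
          exact ih x (by have := size_lt (c := c) hx; omega)
        constructor
        · obtain ⟨r, hr⟩ := htot (.Node c ts)
          cases r with
          | some t' => exact ⟨t', .ok hr⟩
          | none =>
            obtain ⟨ts', hl, hp⟩ := choose_list ts (fun x hx => (ihsub x hx).1)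
            exact ⟨_, .all_ok hr hl hp⟩
        · intro hbad
          cases hbad with
          | all_fail h1 hmem hfail => exact (ihsub _ hmem).2 hfail
  intro t
  exact main (termSize t) t le_rfl
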